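/- arXiv:2403.07749 — 2 statements merged into one kernel-verified Lean document; each statement's English description precedes it below -/
import Mathlib

section
/- Let H be the sum RKHS of finite-dimensional RKHSs H¹ and H² with kernel K = K¹ + K². Then every f ∈ H can be written as a finite linear combination f = Σ_{k=1}^n β_k K(·, y_k) for some points y_1,...,y_n ∈ X and scalars β_1,...,β_n ∈ ℝ, and moreover with the same coefficients, L^i(f) = Σ_k β_k K^i(·, y_k) for i = 1, 2. -/
open RealInnerProductSpace

/-- Lemma 1 of the paper: let `H¹ = span{φ¹_j}`, `H² = span{φ²_j}` be
finite-dimensional feature-map RKHSs with kernels `K^i(x,y) = ∑_j φ^i_j(x) φ^i_j(y)`,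
and let `H = H¹ + H²` (range of the sum map `L`) with kernel `K = K¹ + K²` and
`M = (ker L)ᗮ`. Then every `f ∈ H` is a finite linear combination
`f = ∑_k β_k K(·, y_k)`, and with the same coefficients the minimal-norm decomposition
`(L¹(f), L²(f)) ∈ M` satisfies `L^i(f) = ∑_k β_k K^i(·, y_k)`. -/
theorem stmt_7 {X : Type*}
    {H1 H2 : Type*} [NormedAddCommGroup H1] [InnerProductSpace ℝ H1] [FiniteDimensional ℝ H1]
    [NormedAddCommGroup H2] [InnerProductSpace ℝ H2] [FiniteDimensional ℝ H2]
    (j1 : H1 →ₗ[ℝ] (X → ℝ)) (hj1 : Function.Injective j1)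
    (j2 : H2 →ₗ[ℝ] (X → ℝ)) (hj2 : Function.Injective j2)
    {n1 n2 : ℕ} (φ1 : Fin n1 → X → ℝ) (φ2 : Fin n2 → X → ℝ)
    (hr1 : LinearMap.range j1 = Submodule.span ℝ (Set.range φ1))
    (hr2 : LinearMap.range j2 = Submodule.span ℝ (Set.range φ2))
    (K1 K2 : X → X → ℝ)
    (hK1 : ∀ x y : X, K1 x y = ∑ j, φ1 j x * φ1 j y)
    (hK2 : ∀ x y : X, K2 x y = ∑ j, φ2 j x * φ2 j y)
    (hrep1 : ∀ x : X, ∃ k : H1, j1 k = (fun y => K1 y x) ∧ ∀ f : H1, ⟪f, k⟫ = j1 f x)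
    (hrep2 : ∀ x : X, ∃ k : H2, j2 k = (fun y => K2 y x) ∧ ∀ f : H2, ⟪f, k⟫ = j2 f x)
    (L : WithLp 2 (H1 × H2) →ₗ[ℝ] (X → ℝ))
    (hL : ∀ p : WithLp 2 (H1 × H2), L p = j1 p.ofLp.1 + j2 p.ofLp.2) :
    ∀ f : X → ℝ, f ∈ LinearMap.range L →
      ∃ (n : ℕ) (y : Fin n → X) (β : Fin n → ℝ),
        f = (fun x => ∑ k, β k * (K1 x (y k) + K2 x (y k))) ∧
        ∀ p : WithLp 2 (H1 × H2), p ∈ (LinearMap.ker L)ᗮ → L p = f →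
          j1 p.ofLp.1 = (fun x => ∑ k, β k * K1 x (y k)) ∧
          j2 p.ofLp.2 = (fun x => ∑ k, β k * K2 x (y k)) := by
  intro f hf
  obtain ⟨q, hq⟩ := hf
  classical
  choose k1 hk1 hkr1 using hrep1
  choose k2 hk2 hkr2 using hrep2
  set κ : X → WithLp 2 (H1 × H2) := fun x => (WithLp.equiv 2 (H1 × H2)).symm (k1 x, k2 x)
    with hκ
  have hrep : ∀ (p : WithLp 2 (H1 × H2)) (x : X), ⟪p, κ x⟫ = L p x := by
    intro p x
    rw [WithLp.prod_inner_apply]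
    show ⟪p.ofLp.1, k1 x⟫ + ⟪p.ofLp.2, k2 x⟫ = _
    rw [hkr1, hkr2, hL]
    rfl
  set S : Submodule ℝ (WithLp 2 (H1 × H2)) := Submodule.span ℝ (Set.range κ) with hS
  obtain ⟨p, hpS, z, hz, hqpz⟩ := S.exists_add_mem_mem_orthogonal q
  have hLz : L z = 0 := by
    funext x
    have := hrep z x
    rw [← this, real_inner_comm]
    simpa using hz (κ x) (Submodule.subset_span ⟨x, rfl⟩)
  have hLp : L p = f := by
    rw [← hq, hqpz, map_add, hLz, add_zero]
  have hSM : S ≤ (LinearMap.ker L)ᗮ := by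
    rw [hS, Submodule.span_le]
    rintro _ ⟨x, rfl⟩
    intro u hu
    rw [hrep]
    rw [LinearMap.mem_ker] at hu
    simp [hu]
  obtain ⟨n, β, g, hsum⟩ := Submodule.mem_span_set'.mp hpS
  choose y hy using fun i => (g i).2
  -- component extraction
  set F1 : WithLp 2 (H1 × H2) →ₗ[ℝ] H1 :=
    (LinearMap.fst ℝ H1 H2).comp (WithLp.linearEquiv 2 ℝ (H1 × H2)).toLinearMap with hF1
  set F2 : WithLp 2 (H1 × H2) →ₗ[ℝ] H2 :=
    (LinearMap.snd ℝ H1 H2).comp (WithLp.linearEquiv 2 ℝ (H1 × H2)).toLinearMap with hF2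
  have hp1 : p.ofLp.1 = ∑ i, β i • k1 (y i) := by
    have h : F1 (∑ i, β i • (g i : WithLp 2 (H1 × H2))) = ∑ i, β i • F1 (g i) := by
      rw [map_sum]; exact Finset.sum_congr rfl fun i _ => by rw [map_smul]
    rw [hsum] at h
    refine h.trans (Finset.sum_congr rfl fun i _ => ?_)
    rw [← hy i]
    rfl
  have hp2 : p.ofLp.2 = ∑ i, β i • k2 (y i) := by
    have h : F2 (∑ i, β i • (g i : WithLp 2 (H1 × H2))) = ∑ i, β i • F2 (g i) := by
      rw [map_sum]; exact Finset.sum_congr rfl fun i _ => by rw [map_smul]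
    rw [hsum] at h
    refine h.trans (Finset.sum_congr rfl fun i _ => ?_)
    rw [← hy i]
    rfl
  have hj1p : j1 p.ofLp.1 = (fun x => ∑ k, β k * K1 x (y k)) := by
    funext x
    rw [hp1]
    simp only [map_sum, map_smul, Finset.sum_apply]
    exact Finset.sum_congr rfl fun i _ => by simp [hk1]
  have hj2p : j2 p.ofLp.2 = (fun x => ∑ k, β k * K2 x (y k)) := by
    funext x
    rw [hp2]
    simp only [map_sum, map_smul, Finset.sum_apply]
    exact Finset.sum_congr rfl fun i _ => by simp [hk2]
  refine ⟨n, y, β, ?_, ?_⟩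
  · funext x
    rw [← hLp, hL]
    simp only [Pi.add_apply, hj1p, hj2p]
    rw [← Finset.sum_add_distrib]
    exact Finset.sum_congr rfl fun i _ => by ring
  · intro p' hp' hLp'
    have hpp' : p' = p := by
      have h1 : p' - p ∈ LinearMap.ker L := by
        rw [LinearMap.mem_ker, map_sub, hLp, hLp', sub_self]
      have h2 : p' - p ∈ (LinearMap.ker L)ᗮ := Submodule.sub_mem _ hp' (hSM hpS)
      have h3 := Submodule.inner_right_of_mem_orthogonal h1 h2
      rw [inner_self_eq_zero] at h3
      exact sub_eq_zero.mp h3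
    rw [hpp']
    exact ⟨hj1p, hj2p⟩
end

section
/- Let H be the sum RKHS with kernel K = K¹ + K², let L̄^i(f)(x) = ⟨f, K^i(·,x)⟩_H, and let √(L̄^i) be its positive square root. Define H̄^i = range(√(L̄^i)) with inner product ⟨√(L̄^i)(f̄), √(L̄^i)(ḡ)⟩_{H̄^i} = ⟨Π_{M^i} f̄, Π_{M^i} ḡ⟩_H, where M^i = ker(√(L̄^i))^⊥. Then H̄^i is a reproducing kernel Hilbert space with reproducing kernel K^i: for all g ∈ H̄^i and y ∈ X, ⟨g, K^i(·,y)⟩_{H̄^i} = g(y). -/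
open RealInnerProductSpace

/-- Theorem 3 of the paper: let `H` be the sum RKHS with kernel
`K = K¹ + K²` (feature-map kernels), let `L̄^i(f)(x) = ⟪f, K^i(·,x)⟫_H`, let `S = √L̄^i`
be its positive square root, and let `H̄^i = range S` carry the inner product
`⟪S f̄, S ḡ⟫_{H̄^i} = ⟪Π_{M^i} f̄, Π_{M^i} ḡ⟫_H` where `M^i = (ker S)ᗮ`. Then `H̄^i` is an
RKHS with reproducing kernel `K^i`: each section `K^i(·,y)` lies in `H̄^i` and
`⟪g, K^i(·,y)⟫_{H̄^i} = g(y)` for all `g ∈ H̄^i`, `y ∈ X`. -/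
theorem stmt_17 {X : Type*}
    {H : Type*} [NormedAddCommGroup H] [InnerProductSpace ℝ H] [FiniteDimensional ℝ H]
    (j : H →ₗ[ℝ] (X → ℝ)) (hj : Function.Injective j)
    {n1 n2 : ℕ} (φ1 : Fin n1 → X → ℝ) (φ2 : Fin n2 → X → ℝ)
    (K K1 K2 : X → X → ℝ)
    (hK1 : ∀ x y : X, K1 x y = ∑ l, φ1 l x * φ1 l y)
    (hK2 : ∀ x y : X, K2 x y = ∑ l, φ2 l x * φ2 l y)
    (hsum : ∀ x y : X, K x y = K1 x y + K2 x y)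
    (κ : X → H) (hκ : ∀ x : X, j (κ x) = fun y => K x y)
    (hrep : ∀ (f : H) (x : X), ⟪f, κ x⟫ = j f x)
    (hspan : Submodule.span ℝ (Set.range κ) = ⊤)
    (i : Fin 2)
    (κi : X → H) (hκi : ∀ x : X, j (κi x) = fun y => (if i = 0 then K1 else K2) y x)
    (Lbar : H →ₗ[ℝ] H) (hLbar : ∀ (f : H) (x : X), j (Lbar f) x = ⟪f, κi x⟫)
    -- `S` is the positive square root of `L̄^i`
    (S : H →ₗ[ℝ] H)
    (hSs : ∀ f g : H, ⟪S f, g⟫ = ⟪f, S g⟫)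
    (hSp : ∀ f : H, 0 ≤ ⟪S f, f⟫)
    (hSL : S ∘ₗ S = Lbar)
    -- the inner product on `H̄^i = range S`
    (p : ↥(LinearMap.range S) → ↥(LinearMap.range S) → ℝ)
    (hp : ∀ fb gb : H,
      p ⟨S fb, LinearMap.mem_range_self S fb⟩ ⟨S gb, LinearMap.mem_range_self S gb⟩ =
        ⟪(Submodule.orthogonalProjection (LinearMap.ker S)ᗮ fb : H),
         (Submodule.orthogonalProjection (LinearMap.ker S)ᗮ gb : H)⟫) :
    ∀ y : X, ∃ hm : κi y ∈ LinearMap.range S,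
      ∀ g : ↥(LinearMap.range S), p g ⟨κi y, hm⟩ = j (↑g : H) y := by
  have hLs : ∀ f g : H, ⟪Lbar f, g⟫ = ⟪f, Lbar g⟫ := by
    intro f g
    rw [← hSL]
    simp only [LinearMap.comp_apply]
    rw [hSs, hSs]
  have hkey : ∀ y : X, κi y = Lbar (κ y) := by
    intro y
    apply ext_inner_left ℝ
    intro f
    rw [← hLbar f y, ← hrep (Lbar f) y, hLs]
  intro y
  have hSSκ : κi y = S (S (κ y)) := by
    rw [hkey y, ← hSL]; rfl
  have hm : κi y ∈ LinearMap.range S := ⟨S (κ y), hSSκ.symm⟩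
  refine ⟨hm, ?_⟩
  intro g
  obtain ⟨fb, hfb⟩ := g.2
  have hg : g = ⟨S fb, LinearMap.mem_range_self S fb⟩ := Subtype.ext hfb.symm
  have heq : (⟨κi y, hm⟩ : ↥(LinearMap.range S)) =
      ⟨S (S (κ y)), LinearMap.mem_range_self S (S (κ y))⟩ := Subtype.ext hSSκ
  rw [hg, heq, hp]
  -- `S (κ y)` lies in `(ker S)ᗮ`
  have hmem : S (κ y) ∈ (LinearMap.ker S)ᗮ := by
    intro u hu
    rw [← hSs, LinearMap.mem_ker.mp hu, inner_zero_left]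
  have hproj : ((Submodule.orthogonalProjection (LinearMap.ker S)ᗮ (S (κ y)) : H)) = S (κ y) :=
    Submodule.starProjection_eq_self_iff.mpr hmem
  rw [hproj]
  -- `fb - P fb ∈ ker S`, so `S (P fb) = S fb`
  have hker : fb - (Submodule.orthogonalProjection (LinearMap.ker S)ᗮ fb : H) ∈ LinearMap.ker S := by
    have : fb - (Submodule.orthogonalProjection (LinearMap.ker S)ᗮ fb : H) ∈ (LinearMap.ker S)ᗮᗮ :=
      Submodule.sub_starProjection_mem_orthogonal (K := (LinearMap.ker S)ᗮ) fb
    rwa [Submodule.orthogonal_orthogonal] at this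
  have hSfb : S ((Submodule.orthogonalProjection (LinearMap.ker S)ᗮ fb : H)) = S fb := by
    have h0 : S (fb - (Submodule.orthogonalProjection (LinearMap.ker S)ᗮ fb : H)) = 0 :=
      LinearMap.mem_ker.mp hker
    rw [map_sub, sub_eq_zero] at h0
    exact h0.symm
  calc ⟪(Submodule.orthogonalProjection (LinearMap.ker S)ᗮ fb : H), S (κ y)⟫
      = ⟪S (Submodule.orthogonalProjection (LinearMap.ker S)ᗮ fb : H), κ y⟫ := by rw [← hSs]
    _ = ⟪S fb, κ y⟫ := by rw [hSfb]
    _ = j (S fb) y := hrep _ y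
end
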